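/- Let G_D be the enveloping group of the dihedral quandle on three elements, that is of ℤ/3ℤ with operation i ▷ j = 2i - j. Then the direct product ℤ × G_D is isomorphic to Γ₃. -/

import Mathlib

/-- The defining relations of the group
`Γₙ = ⟨g, h, ε ∣ hg = εgh, gε = ε⁻¹g, hε = εh, εⁿ = 1⟩`,
with generators `0 ↦ g`, `1 ↦ h`, `2 ↦ ε`. -/
def GammaRels (n : ℕ) : Set (FreeGroup (Fin 3)) :=
  { FreeGroup.of 1 * FreeGroup.of 0 * (FreeGroup.of 2 * FreeGroup.of 0 * FreeGroup.of 1)⁻¹,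
    FreeGroup.of 0 * FreeGroup.of 2 * ((FreeGroup.of 2)⁻¹ * FreeGroup.of 0)⁻¹,
    FreeGroup.of 1 * FreeGroup.of 2 * (FreeGroup.of 2 * FreeGroup.of 1)⁻¹,
    (FreeGroup.of 2) ^ n }

/-- The group `Γₙ = ⟨g, h, ε ∣ hg = εgh, gε = ε⁻¹g, hε = εh, εⁿ = 1⟩`. -/
def Gamma (n : ℕ) : Type := PresentedGroup (GammaRels n)

instance (n : ℕ) : Group (Gamma n) := inferInstanceAs (Group (PresentedGroup (GammaRels n)))

open Quandles

namespace Stmt16Aux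


abbrev Env : Type := Rack.EnvelGroup (Quandle.Dihedral 3)

def tq (x : ZMod 3) : Env := Rack.toEnvelGroup (Quandle.Dihedral 3) x

lemma tq_conj (x y : ZMod 3) : tq (2 * x - y) = tq x * tq y * (tq x)⁻¹ := by
  have h := (Rack.toEnvelGroup (Quandle.Dihedral 3)).map_act (x := x) (y := y)
  rw [Quandle.conj_act_eq_conj] at h
  exact h

noncomputable def a : Env := tq 0
noncomputable def b : Env := tq 1
noncomputable def c : Env := tq 2

lemma hab : a * b * a⁻¹ = c := by
  have h := tq_conj 0 1
  rw [show (2 * (0:ZMod 3) - 1) = 2 from by decide] at h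
  exact h.symm

lemma hac : a * c * a⁻¹ = b := by
  have h := tq_conj 0 2
  rw [show (2 * (0:ZMod 3) - 2) = 1 from by decide] at h
  exact h.symm

lemma hba : b * a * b⁻¹ = c := by
  have h := tq_conj 1 0
  rw [show (2 * (1:ZMod 3) - 0) = 2 from by decide] at h
  exact h.symm

lemma hbc : b * c * b⁻¹ = a := by
  have h := tq_conj 1 2
  rw [show (2 * (1:ZMod 3) - 2) = 0 from by decide] at h
  exact h.symm

lemma hcb : c * b * c⁻¹ = a := by
  have h := tq_conj 2 1
  rw [show (2 * (2:ZMod 3) - 1) = 0 from by decide] at h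
  exact h.symm

-- c expressed two ways
lemma d1 : c = b⁻¹ * a * b := by
  rw [← hbc]; group

lemma d3 : c = a⁻¹ * b * a := by
  rw [← hac]; group

-- b² commutes with a
lemma d2 : b * b * a = a * (b * b) := by
  have h : b * a * b⁻¹ = b⁻¹ * a * b := by rw [hba, d1]
  calc b * b * a = b * (b * a * b⁻¹) * b := by group
    _ = b * (b⁻¹ * a * b) * b := by rw [h]
    _ = a * (b * b) := by group

-- a² commutes with b
lemma d4 : a * a * b = b * (a * a) := by
  have h : a * b * a⁻¹ = a⁻¹ * b * a := by rw [hab, d3]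
  calc a * a * b = a * (a * b * a⁻¹) * a := by group
    _ = a * (a⁻¹ * b * a) * a := by rw [h]
    _ = b * (a * a) := by group

lemma braid : a * b * a = b * a * b := by
  have h := hcb
  rw [d3] at h
  -- (a⁻¹ b a) b (a⁻¹ b a)⁻¹ = a
  have h2 : a⁻¹ * b * a * b = b * a := by
    have := congrArg (· * (a⁻¹ * b * a)) h
    simpa [mul_assoc] using this
  calc a * b * a = a * (b * a) := by group
    _ = a * (a⁻¹ * b * a * b) := by rw [h2]
    _ = b * a * b := by group

-- a² = b²
lemma hsq : a * a = b * b := by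
  have key : a * (a * (a * b)) = a * (b * (b * b)) := by
    calc a * (a * (a * b)) = a * (a * a * b) := by group
      _ = a * (b * (a * a)) := by rw [d4]
      _ = (a * b * a) * a := by group
      _ = (b * a * b) * a := by rw [braid]
      _ = b * (a * b * a) := by group
      _ = b * (b * a * b) := by rw [braid]
      _ = (b * b * a) * b := by group
      _ = (a * (b * b)) * b := by rw [d2]
      _ = a * (b * (b * b)) := by group
  have key2 : a * (a * b) = b * (b * b) := mul_left_cancel key
  calc a * a = a * (a * b) * b⁻¹ := by group
    _ = b * (b * b) * b⁻¹ := by rw [key2]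
    _ = b * b := by group

lemma hcc : c * c = a * a := by
  calc c * c = (a * b * a⁻¹) * (a * b * a⁻¹) := by rw [hab]
    _ = a * (b * b) * a⁻¹ := by group
    _ = a * (a * a) * a⁻¹ := by rw [← hsq]
    _ = a * a := by group

-- L1 : a * b⁻¹ * a = c
lemma L1 : a * b⁻¹ * a = c := by
  have hbinv : b⁻¹ = b * a⁻¹ * a⁻¹ := by
    calc b⁻¹ = b * (b * b)⁻¹ := by group
      _ = b * (a * a)⁻¹ := by rw [← hsq]
      _ = b * a⁻¹ * a⁻¹ := by group
  calc a * b⁻¹ * a = a * (b * a⁻¹ * a⁻¹) * a := by rw [← hbinv]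
    _ = a * b * a⁻¹ := by group
    _ = c := hab

-- L5 : b * a⁻¹ * b = c
lemma L5 : b * a⁻¹ * b = c := by
  have hainv : a⁻¹ = b⁻¹ * b⁻¹ * a := by
    calc a⁻¹ = (a * a)⁻¹ * a := by group
      _ = (b * b)⁻¹ * a := by rw [hsq]
      _ = b⁻¹ * b⁻¹ * a := by group
  calc b * a⁻¹ * b = b * (b⁻¹ * b⁻¹ * a) * b := by rw [← hainv]
    _ = b⁻¹ * a * b := by group
    _ = c := d1.symm

-- L3 : relator 2 in Env
lemma L3 : a * b * a⁻¹ * a⁻¹ * b * a⁻¹ = 1 := by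
  calc a * b * a⁻¹ * a⁻¹ * b * a⁻¹ = (a * b * a⁻¹) * (a⁻¹ * b * a) * (a⁻¹ * a⁻¹) := by group
    _ = c * c * (a⁻¹ * a⁻¹) := by rw [hab, ← d3]
    _ = a * a * (a⁻¹ * a⁻¹) := by rw [hcc]
    _ = 1 := by group

-- L4 : (b * a⁻¹)³ = 1
lemma L4 : (b * a⁻¹) ^ 3 = 1 := by
  have : (b * a⁻¹) ^ 3 = (b * a⁻¹ * b) * (a⁻¹ * b * a) * (a⁻¹ * a⁻¹) := by rw [pow_succ, pow_succ, pow_one]; group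
  rw [this, L5, ← d3, hcc]
  group



-- ### The Gamma 3 side

abbrev Γ : Type := Gamma 3

def G : Γ := PresentedGroup.of 0
def H : Γ := PresentedGroup.of 1
def E : Γ := PresentedGroup.of 2

lemma rel_one {r : FreeGroup (Fin 3)} (h : r ∈ GammaRels 3) :
    PresentedGroup.mk (GammaRels 3) r = 1 :=
  (QuotientGroup.eq_one_iff r).mpr (Subgroup.subset_normalClosure h)

lemma hHG : H * G = E * (G * H) := by
  have h := rel_one (Set.mem_insert _ _)
  simp only [map_mul, map_inv] at h
  have h2 := mul_inv_eq_one.mp h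
  show H * G = E * (G * H)
  rw [← mul_assoc]
  exact h2

lemma hGE : G * E = E⁻¹ * G := by
  have h := rel_one (Set.mem_insert_of_mem _ (Set.mem_insert _ _))
  simp only [map_mul, map_inv] at h
  have h2 := mul_inv_eq_one.mp h
  exact h2

lemma hHE : H * E = E * H := by
  have h := rel_one (Set.mem_insert_of_mem _ (Set.mem_insert_of_mem _ (Set.mem_insert _ _)))
  simp only [map_mul, map_inv] at h
  exact mul_inv_eq_one.mp h

lemma hE3 : E ^ 3 = 1 := by
  have h := rel_one (show (FreeGroup.of 2) ^ 3 ∈ GammaRels 3 from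
    Set.mem_insert_of_mem _ (Set.mem_insert_of_mem _ (Set.mem_insert_of_mem _ rfl)))
  simp only [map_pow] at h
  exact h

/-- `ε^z` for `z : ZMod 3`. -/
def Ehat (z : ZMod 3) : Γ := E ^ z.val

lemma hpowmod (m : ℕ) : E ^ m = E ^ (m % 3) := by
  conv_lhs => rw [← Nat.div_add_mod m 3]
  rw [pow_add, pow_mul, hE3, one_pow, one_mul]

lemma hEadd (p q : ZMod 3) : Ehat (p + q) = Ehat p * Ehat q := by
  unfold Ehat
  rw [ZMod.val_add, ← hpowmod, pow_add]

lemma Ehat0 : Ehat 0 = 1 := rfl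

lemma hEneg (z : ZMod 3) : Ehat (-z) = (Ehat z)⁻¹ := by
  have h : Ehat z * Ehat (-z) = 1 := by
    rw [← hEadd, add_neg_cancel, Ehat0]
  exact inv_eq_of_mul_eq_one_right h |>.symm

lemma hGEhat (z : ZMod 3) : G * Ehat z = Ehat (-z) * G := by
  have hc : G * E * G⁻¹ = E⁻¹ := by rw [hGE]; group
  have h2 : G * E ^ z.val * G⁻¹ = (E ^ z.val)⁻¹ := by
    rw [← conj_pow, hc, inv_pow]
  rw [hEneg]
  unfold Ehat
  calc G * E ^ z.val = G * E ^ z.val * G⁻¹ * G := by group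
    _ = (E ^ z.val)⁻¹ * G := by rw [h2]

lemma hfq (x y : ZMod 3) :
    Ehat (2 * x - y) * G = (Ehat x * G) * (Ehat y * G) * (Ehat x * G)⁻¹ := by
  have e1 : (Ehat x * G) * (Ehat y * G) * (Ehat x * G)⁻¹
      = Ehat x * (G * Ehat y) * (Ehat x)⁻¹ := by group
  rw [e1, hGEhat y, ← hEneg x]
  have e2 : Ehat x * (Ehat (-y) * G) * Ehat (-x) = Ehat x * Ehat (-y) * (G * Ehat (-x)) := by
    group
  rw [e2, hGEhat (-x), neg_neg]
  rw [show (2 * x - y) = x + -y + x by ring, hEadd, hEadd]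
  group

/-- The quandle homomorphism `Dihedral 3 → Conj (Gamma 3)`, `i ↦ ε^i g`. -/
def fq : Quandle.Dihedral 3 →◃ Quandle.Conj Γ where
  toFun x := Ehat x * G
  map_act' := fun {x y} => hfq x y

noncomputable def φ₂ : Env →* Γ := Rack.toEnvelGroup.map fq

lemma φ₂tq (x : ZMod 3) : φ₂ (tq x) = Ehat x * G := rfl

-- ### The central element and the forward homomorphism

/-- The central element `ε h`. -/
def Z : Γ := E * H

lemma hE3' : E * E * E = 1 := by
  rw [show E * E * E = E ^ 3 by rw [pow_succ, pow_two], hE3]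

lemma hZG : Z * G = G * Z := by
  unfold Z
  calc E * H * G = E * (H * G) := by group
    _ = E * (E * (G * H)) := by rw [hHG]
    _ = E⁻¹ * (E * E * E) * G * H := by group
    _ = E⁻¹ * 1 * G * H := by rw [hE3']
    _ = E⁻¹ * G * H := by group
    _ = (G * E) * H := by rw [← hGE]
    _ = G * (E * H) := by group

lemma hZH : Z * H = H * Z := by
  unfold Z
  calc E * H * H = E * (H * H) := by group
    _ = (H * E) * H := by rw [hHE]; group

lemma hZE : Z * E = E * Z := by
  unfold Z
  calc E * H * E = E * (H * E) := by group
    _ = E * (E * H) := by rw [hHE]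

lemma hZcomm (x : Γ) : Z * x = x * Z := by
  have hx : x ∈ Subgroup.centralizer {Z} := by
    apply PresentedGroup.generated_by
    intro j
    refine Subgroup.mem_centralizer_iff.mpr ?_
    intro g hg
    replace hg := Set.mem_singleton_iff.mp hg
    subst hg
    fin_cases j
    · exact hZG
    · exact hZH
    · exact hZE
  exact Subgroup.mem_centralizer_iff.mp hx Z (Set.mem_singleton _)

lemma hZcommute (x : Γ) : Commute Z x := hZcomm x

/-- The forward homomorphism `ℤ × G_D → Γ₃`. -/
noncomputable def φ : Multiplicative ℤ × Env →* Γ where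
  toFun p := Z ^ (Multiplicative.toAdd p.1) * φ₂ p.2
  map_one' := by simp
  map_mul' p q := by
    simp only [Prod.fst_mul, Prod.snd_mul, toAdd_mul, zpow_add, map_mul]
    have hzc : φ₂ p.2 * Z ^ (Multiplicative.toAdd q.1)
        = Z ^ (Multiplicative.toAdd q.1) * φ₂ p.2 :=
      ((hZcommute (φ₂ p.2)).zpow_left _).eq.symm
    calc Z ^ (Multiplicative.toAdd p.1) * Z ^ (Multiplicative.toAdd q.1) * (φ₂ p.2 * φ₂ q.2)
        = Z ^ (Multiplicative.toAdd p.1) * (Z ^ (Multiplicative.toAdd q.1) * φ₂ p.2) * φ₂ q.2 := by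
          group
      _ = Z ^ (Multiplicative.toAdd p.1) * (φ₂ p.2 * Z ^ (Multiplicative.toAdd q.1)) * φ₂ q.2 := by
          rw [hzc]
      _ = Z ^ (Multiplicative.toAdd p.1) * φ₂ p.2 * (Z ^ (Multiplicative.toAdd q.1) * φ₂ q.2) := by
          group

-- ### The backward homomorphism

noncomputable def fγ : Fin 3 → Multiplicative ℤ × Env
  | 0 => (1, a)
  | 1 => (Multiplicative.ofAdd 1, a * b⁻¹)
  | 2 => (1, b * a⁻¹)

lemma hrels : ∀ r ∈ GammaRels 3, FreeGroup.lift fγ r = 1 := by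
  intro r hr
  simp only [GammaRels, Set.mem_insert_iff, Set.mem_singleton_iff] at hr
  rcases hr with rfl | rfl | rfl | rfl
  · simp only [map_mul, map_inv, FreeGroup.lift_apply_of, fγ]
    rw [mul_inv_eq_one]
    refine Prod.ext ?_ ?_
    · show Multiplicative.ofAdd 1 * 1 = 1 * 1 * Multiplicative.ofAdd 1
      group
    · show a * b⁻¹ * a = b * a⁻¹ * a * (a * b⁻¹)
      rw [L1, ← hba]
      group
  · simp only [map_mul, map_inv, FreeGroup.lift_apply_of, fγ]
    rw [mul_inv_eq_one]
    refine Prod.ext ?_ ?_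
    · show (1 : Multiplicative ℤ) * 1 = 1⁻¹ * 1
      group
    · show a * (b * a⁻¹) = (b * a⁻¹)⁻¹ * a
      calc a * (b * a⁻¹) = a * b * a⁻¹ := by group
        _ = c := hab
        _ = a * b⁻¹ * a := L1.symm
        _ = (b * a⁻¹)⁻¹ * a := by group
  · simp only [map_mul, map_inv, FreeGroup.lift_apply_of, fγ]
    rw [mul_inv_eq_one]
    refine Prod.ext ?_ ?_
    · show Multiplicative.ofAdd 1 * 1 = 1 * Multiplicative.ofAdd 1
      group
    · show a * b⁻¹ * (b * a⁻¹) = b * a⁻¹ * (a * b⁻¹)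
      group
  · simp only [map_mul, map_inv, map_pow, FreeGroup.lift_apply_of, fγ]
    refine Prod.ext ?_ ?_
    · show (1 : Multiplicative ℤ) ^ 3 = 1
      group
    · show (b * a⁻¹) ^ 3 = 1
      exact L4

/-- The backward homomorphism `Γ₃ → ℤ × G_D`. -/
noncomputable def χ : Γ →* Multiplicative ℤ × Env := PresentedGroup.toGroup hrels

-- ### The compositions

lemma env_ext {G' : Type*} [Group G'] {F₁ F₂ : Env →* G'}
    (h : ∀ x : ZMod 3, F₁ (tq x) = F₂ (tq x)) : F₁ = F₂ := by
  apply Rack.toEnvelGroup.map.symm.injective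
  exact DFunLike.ext _ _ fun x => h x

lemma χG : χ G = (1, a) := PresentedGroup.toGroup.of hrels
lemma χH : χ H = (Multiplicative.ofAdd 1, a * b⁻¹) := PresentedGroup.toGroup.of hrels
lemma χE : χ E = (1, b * a⁻¹) := PresentedGroup.toGroup.of hrels

lemma Ehat1 : Ehat 1 = E := by
  show E ^ (1 : ZMod 3).val = E
  rw [show ((1 : ZMod 3).val) = 1 by decide, pow_one]

lemma Ehat2 : Ehat 2 = E * E := by
  show E ^ (2 : ZMod 3).val = E * E
  rw [show ((2 : ZMod 3).val) = 2 by decide, pow_two]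

lemma χφ₂ : χ.comp φ₂ = MonoidHom.inr (Multiplicative ℤ) Env := by
  apply env_ext
  intro x
  have hx : φ₂ (tq x) = Ehat x * G := φ₂tq x
  fin_cases x
  · show χ (φ₂ (tq 0)) = (1, tq 0)
    rw [φ₂tq, Ehat0, one_mul, χG]
    rfl
  · show χ (φ₂ (tq 1)) = (1, tq 1)
    rw [φ₂tq, Ehat1, map_mul, χE, χG]
    refine Prod.ext (by simp) ?_
    show b * a⁻¹ * a = tq 1
    have : b * a⁻¹ * a = b := by group
    rw [this]; rfl
  · show χ (φ₂ (tq 2)) = (1, tq 2)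
    rw [φ₂tq, Ehat2, map_mul, map_mul, χE, χG]
    refine Prod.ext (by simp) ?_
    show b * a⁻¹ * (b * a⁻¹) * a = tq 2
    have : b * a⁻¹ * (b * a⁻¹) * a = b * a⁻¹ * b := by group
    rw [this, L5]; rfl

lemma χZ : χ Z = (Multiplicative.ofAdd 1, 1) := by
  unfold Z
  rw [map_mul, χE, χH]
  refine Prod.ext (by simp) ?_
  show b * a⁻¹ * (a * b⁻¹) = 1
  group

lemma left_inverse : ∀ p : Multiplicative ℤ × Env, χ (φ p) = p := by
  rintro ⟨m, u⟩
  show χ (Z ^ (Multiplicative.toAdd m) * φ₂ u) = (m, u)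
  rw [map_mul, map_zpow, χZ]
  have h1 : χ (φ₂ u) = (1, u) := by
    have := congrFun (congrArg DFunLike.coe χφ₂) u
    simpa using this
  rw [h1]
  have h2 : ((Multiplicative.ofAdd 1, (1 : Env)) : Multiplicative ℤ × Env)
      ^ (Multiplicative.toAdd m) = (m, 1) := by
    refine Prod.ext ?_ ?_
    · show (Multiplicative.ofAdd 1) ^ (Multiplicative.toAdd m) = m
      rw [← ofAdd_zsmul, smul_eq_mul, mul_one, ofAdd_toAdd]
    · show (1 : Env) ^ (Multiplicative.toAdd m) = 1
      group
  rw [h2]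
  refine Prod.ext (by simp) (by simp)

lemma right_inverse : ∀ x : Γ, φ (χ x) = x := by
  have h : φ.comp χ = MonoidHom.id Γ := by
    apply PresentedGroup.ext
    intro j
    fin_cases j
    · show φ (χ G) = G
      rw [χG]
      show Z ^ (Multiplicative.toAdd (1 : Multiplicative ℤ)) * φ₂ a = G
      have : φ₂ a = Ehat 0 * G := φ₂tq 0
      rw [this, Ehat0]
      simp
    · show φ (χ H) = H
      rw [χH]
      show Z ^ (Multiplicative.toAdd (Multiplicative.ofAdd (1:ℤ))) * φ₂ (a * b⁻¹) = H
      rw [map_mul, map_inv]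
      have ha : φ₂ a = Ehat 0 * G := φ₂tq 0
      have hb : φ₂ b = Ehat 1 * G := φ₂tq 1
      rw [ha, hb, Ehat0, Ehat1, toAdd_ofAdd, zpow_one]
      unfold Z
      calc E * H * (1 * G * (E * G)⁻¹) = E * (H * E⁻¹) * (G * G⁻¹) := by group
        _ = E * (H * E⁻¹) := by group
        _ = H := by
            calc E * (H * E⁻¹) = E * H * E⁻¹ := by group
              _ = H * E * E⁻¹ := by rw [← hHE]
              _ = H := by group
    · show φ (χ E) = E
      rw [χE]
      show Z ^ (Multiplicative.toAdd (1 : Multiplicative ℤ)) * φ₂ (b * a⁻¹) = E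
      rw [map_mul, map_inv]
      have ha : φ₂ a = Ehat 0 * G := φ₂tq 0
      have hb : φ₂ b = Ehat 1 * G := φ₂tq 1
      rw [ha, hb, Ehat0, Ehat1]
      simp only [toAdd_one, zpow_zero, one_mul]
      group
  intro x
  exact DFunLike.congr_fun h x

end Stmt16Aux

theorem stmt16 :
    Nonempty ((Multiplicative ℤ × Rack.EnvelGroup (Quandle.Dihedral 3)) ≃* Gamma 3) := by
  exact ⟨{ toFun := Stmt16Aux.φ
           invFun := Stmt16Aux.χ
           left_inv := Stmt16Aux.left_inverse
           right_inv := Stmt16Aux.right_inverse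
           map_mul' := Stmt16Aux.φ.map_mul }⟩
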